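/- Fix ε > 0. Any maximal solution x : [0, b) → ℝ of the ODE x''(t) = (1+ε) x(t)^{1+2ε} with initial conditions x(0) = 1, x'(0) = 0 has b < +∞; more precisely, the solution satisfies x'(t)² = x(t)^{2(1+ε)} - 1 and blows up in finite time since ∫₁^∞ dσ/√(σ^{2(1+ε)} - 1) < +∞. -/

import Mathlib

open Set MeasureTheory

/-- monotone from nonneg derivative on Ici -/
lemma BU.monoIci {f f' : ℝ → ℝ} {a : ℝ} (hd : ∀ t ∈ Ici a, HasDerivAt f (f' t) t)
    (h0 : ∀ t ∈ Ici a, 0 ≤ f' t) : MonotoneOn f (Ici a) := by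
  apply monotoneOn_of_hasDerivWithinAt_nonneg (convex_Ici a)
    (fun t ht => (hd t ht).continuousAt.continuousWithinAt)
  · intro t ht
    rw [interior_Ici] at ht
    exact (hd t (Ioi_subset_Ici_self ht)).hasDerivWithinAt
  · intro t ht
    rw [interior_Ici] at ht
    exact h0 t (Ioi_subset_Ici_self ht)

lemma BU.antiIci {f f' : ℝ → ℝ} {a : ℝ} (hd : ∀ t ∈ Ici a, HasDerivAt f (f' t) t)
    (h0 : ∀ t ∈ Ici a, f' t ≤ 0) : AntitoneOn f (Ici a) := by
  apply antitoneOn_of_hasDerivWithinAt_nonpos (convex_Ici a)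
    (fun t ht => (hd t ht).continuousAt.continuousWithinAt)
  · intro t ht
    rw [interior_Ici] at ht
    exact (hd t (Ioi_subset_Ici_self ht)).hasDerivWithinAt
  · intro t ht
    rw [interior_Ici] at ht
    exact h0 t (Ioi_subset_Ici_self ht)

/-- energy identity -/
lemma BU.energy (ε : ℝ) (hε : 0 < ε) (b : ℝ) (x x' : ℝ → ℝ)
    (hx : ∀ t ∈ Set.Ico (0:ℝ) b, HasDerivAt x (x' t) t)
    (hx' : ∀ t ∈ Set.Ico (0:ℝ) b, HasDerivAt x' ((1 + ε) * x t ^ (1 + 2 * ε)) t)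
    (h0 : x 0 = 1) (h0' : x' 0 = 0) :
    ∀ t ∈ Set.Ico (0:ℝ) b, (x' t) ^ 2 = x t ^ (2 * (1 + ε)) - 1 := by
  intro t ht
  obtain ⟨ht0, htb⟩ := ht
  have hsub : Icc (0:ℝ) t ⊆ Ico 0 b := fun s hs => ⟨hs.1, lt_of_le_of_lt hs.2 htb⟩
  set E : ℝ → ℝ := fun s => x' s ^ 2 - (x s ^ (2 * (1 + ε)) - 1) with hE
  have hpe : (1:ℝ) ≤ 2 * (1 + ε) := by nlinarith
  have hder : ∀ s ∈ Icc (0:ℝ) t, HasDerivAt E 0 s := by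
    intro s hs
    have hs' := hsub hs
    have d1 : HasDerivAt (fun u => x' u ^ 2)
        ((2:ℕ) * x' s ^ 1 * ((1 + ε) * x s ^ (1 + 2 * ε))) s := (hx' s hs').pow 2
    have d2 : HasDerivAt (fun u => x u ^ (2 * (1 + ε)) - 1)
        (x' s * (2 * (1 + ε)) * x s ^ (2 * (1 + ε) - 1)) s :=
      ((hx s hs').rpow_const (Or.inr hpe)).sub_const 1
    have := d1.sub d2
    refine this.congr_deriv ?_
    have h21 : 2 * (1 + ε) - 1 = 1 + 2 * ε := by ring
    rw [h21]
    push_cast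
    ring
  have hcont : ContinuousOn E (Icc 0 t) :=
    fun s hs => (hder s hs).continuousAt.continuousWithinAt
  have hconst := constant_of_has_deriv_right_zero hcont
    (fun s hs => (hder s (Ico_subset_Icc_self hs)).hasDerivWithinAt) t
    (right_mem_Icc.mpr ht0)
  have hE0 : E 0 = 0 := by
    simp [hE, h0, h0', Real.one_rpow]
  have : E t = 0 := by rw [hconst, hE0]
  simpa [hE, sub_eq_zero] using this

lemma BU.noglobal (ε : ℝ) (hε : 0 < ε) :
    ¬ ∃ x x' : ℝ → ℝ,
      (∀ t : ℝ, 0 ≤ t → HasDerivAt x (x' t) t) ∧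
      (∀ t : ℝ, 0 ≤ t → HasDerivAt x' ((1 + ε) * x t ^ (1 + 2 * ε)) t) ∧
      x 0 = 1 ∧ x' 0 = 0 := by
  rintro ⟨x, x', hx, hx', h0, h0'⟩
  have hp1 : (0:ℝ) < 2 * (1 + ε) := by nlinarith
  -- energy for all t ≥ 0
  have energy : ∀ t : ℝ, 0 ≤ t → (x' t) ^ 2 = x t ^ (2 * (1 + ε)) - 1 := by
    intro t ht
    exact BU.energy ε hε (t + 1) x x' (fun s hs => hx s hs.1) (fun s hs => hx' s hs.1)
      h0 h0' t ⟨ht, by linarith⟩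
  -- x ≥ 1
  have hx1 : ∀ t : ℝ, 0 ≤ t → 1 ≤ x t := by
    intro t ht
    by_contra h
    push_neg at h
    rcases le_or_gt 0 (x t) with hpos | hneg
    · have : x t ^ (2 * (1 + ε)) < 1 := Real.rpow_lt_one hpos h hp1
      nlinarith [energy t ht, sq_nonneg (x' t)]
    · have hc : ContinuousOn x (Icc 0 t) := fun s hs =>
        (hx s hs.1).continuousAt.continuousWithinAt
      have hmem : (1/2 : ℝ) ∈ Icc (x t) (x 0) := by
        rw [h0]; constructor <;> [linarith; norm_num]
      obtain ⟨s, hs, hxs⟩ := intermediate_value_Icc' ht hc hmem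
      have : x s ^ (2 * (1 + ε)) < 1 := by
        rw [hxs]; exact Real.rpow_lt_one (by norm_num) (by norm_num) hp1
      nlinarith [energy s hs.1, sq_nonneg (x' s)]
  -- second derivative lower bound
  have hx'' : ∀ t : ℝ, 0 ≤ t → 1 + ε ≤ (1 + ε) * x t ^ (1 + 2 * ε) := by
    intro t ht
    have h1 : 1 ≤ x t ^ (1 + 2 * ε) := Real.one_le_rpow (hx1 t ht) (by linarith)
    nlinarith
  -- x' ≥ 0
  have hx'mono : MonotoneOn x' (Ici 0) :=
    BU.monoIci (fun t ht => hx' t ht) (fun t ht => le_trans (by linarith) (hx'' t ht))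
  have hx'0 : ∀ t : ℝ, 0 ≤ t → 0 ≤ x' t := by
    intro t ht
    have := hx'mono (self_mem_Ici) ht ht
    rwa [h0'] at this
  -- x monotone
  have hxmono : MonotoneOn x (Ici 0) := BU.monoIci (fun t ht => hx t ht) hx'0
  -- linear growth of x'
  have hx'lin : ∀ t : ℝ, 0 ≤ t → (1 + ε) * t ≤ x' t := by
    intro t ht
    have hd : ∀ s ∈ Ici (0:ℝ), HasDerivAt (fun u => x' u - (1 + ε) * u)
        ((1 + ε) * x s ^ (1 + 2 * ε) - (1 + ε)) s := by
      intro s hs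
      have := (hx' s hs).sub (((hasDerivAt_id s).const_mul (1 + ε)))
      simp only [mul_one] at this
      exact this
    have hmono := BU.monoIci hd (fun s hs => by linarith [hx'' s hs])
    have := hmono self_mem_Ici ht ht
    simp only [h0'] at this
    linarith
  -- quadratic growth of x
  have hxquad : ∀ t : ℝ, 0 ≤ t → 1 + (1 + ε) / 2 * t ^ 2 ≤ x t := by
    intro t ht
    have hd : ∀ s ∈ Ici (0:ℝ), HasDerivAt (fun u => x u - (1 + ε) / 2 * u ^ 2)
        (x' s - (1 + ε) * s) s := by
      intro s hs
      have := (hx s hs).sub (((hasDerivAt_pow 2 s).const_mul ((1 + ε) / 2)))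
      refine this.congr_deriv ?_
      push_cast
      ring
    have hmono := BU.monoIci hd (fun s hs => by linarith [hx'lin s hs])
    have := hmono self_mem_Ici ht ht
    simp only [h0] at this
    nlinarith
  have hx2 : ∀ t : ℝ, 2 ≤ t → 2 ≤ x t := by
    intro t ht
    have h02 : (0:ℝ) ≤ 2 := by norm_num
    have := hxmono (by exact h02) (le_trans h02 ht) ht
    have h2 := hxquad 2 h02
    nlinarith
  -- lower bound for x' for t ≥ 2
  have hs2 : (0:ℝ) < Real.sqrt 2 := Real.sqrt_pos.mpr (by norm_num)
  have hx'low : ∀ t : ℝ, 2 ≤ t → x t ^ (1 + ε) / Real.sqrt 2 ≤ x' t := by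
    intro t ht
    have ht0 : (0:ℝ) ≤ t := by linarith
    have hxt : 2 ≤ x t := hx2 t ht
    have hxp2 : (2:ℝ) ≤ x t ^ (2 * (1 + ε)) := by
      calc (2:ℝ) = 2 ^ (1:ℝ) := (Real.rpow_one 2).symm
        _ ≤ 2 ^ (2 * (1 + ε)) := Real.rpow_le_rpow_of_exponent_le one_le_two (by nlinarith)
        _ ≤ x t ^ (2 * (1 + ε)) := Real.rpow_le_rpow (by norm_num) hxt (le_of_lt hp1)
    have hen := energy t ht0
    have hsq : x t ^ (2 * (1 + ε)) / 2 ≤ x' t ^ 2 := by nlinarith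
    have h1 : Real.sqrt (x t ^ (2 * (1 + ε)) / 2) ≤ x' t := by
      rw [show x' t = Real.sqrt (x' t ^ 2) from (Real.sqrt_sq (hx'0 t ht0)).symm]
      exact Real.sqrt_le_sqrt hsq
    have hx0 : (0:ℝ) ≤ x t := by linarith
    have hsq2 : x t ^ (2 * (1 + ε)) = (x t ^ (1 + ε)) ^ 2 := by
      rw [← Real.rpow_natCast (x t ^ (1 + ε)) 2, ← Real.rpow_mul hx0]
      norm_num
      ring_nf
    have h2 : Real.sqrt (x t ^ (2 * (1 + ε)) / 2)
        = x t ^ (1 + ε) / Real.sqrt 2 := by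
      rw [Real.sqrt_div (by positivity), hsq2, Real.sqrt_sq (by positivity)]
    linarith [h1, h2.symm.le]
  -- the function g = x ^ (-ε) decreases at linear rate on [2, ∞)
  set c : ℝ := ε / Real.sqrt 2 with hc
  have hcpos : 0 < c := div_pos hε hs2
  have hgd : ∀ t ∈ Ici (2:ℝ), HasDerivAt (fun u => x u ^ (-ε : ℝ) + c * u)
      (x' t * (-ε) * x t ^ (-ε - 1) + c) t := by
    intro t ht
    have ht0 : (0:ℝ) ≤ t := by linarith [mem_Ici.mp ht]
    have hne : x t ≠ 0 := by have := hx1 t ht0; linarith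
    have hd1 : HasDerivAt (fun u => x u ^ (-ε:ℝ)) (x' t * (-ε) * x t ^ ((-ε:ℝ) - 1)) t :=
      (hx t ht0).rpow_const (p := (-ε:ℝ)) (Or.inl hne)
    have := hd1.add ((hasDerivAt_id t).const_mul c)
    simp only [mul_one] at this
    exact this
  have hgd0 : ∀ t ∈ Ici (2:ℝ), x' t * (-ε) * x t ^ (-ε - 1) + c ≤ 0 := by
    intro t ht
    have ht2 := mem_Ici.mp ht
    have ht0 : (0:ℝ) ≤ t := by linarith
    have hxpos : (0:ℝ) < x t := by linarith [hx1 t ht0]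
    have hr : x t ^ (1 + ε) * x t ^ (-ε - 1) = 1 := by
      rw [← Real.rpow_add hxpos, show 1 + ε + (-ε - 1) = 0 by ring, Real.rpow_zero]
    have hrpos : (0:ℝ) < x t ^ (-ε - 1) := Real.rpow_pos_of_pos hxpos _
    have hlow := hx'low t ht2
    have : x t ^ (1 + ε) / Real.sqrt 2 * x t ^ (-ε - 1) ≤ x' t * x t ^ (-ε - 1) :=
      mul_le_mul_of_nonneg_right hlow (le_of_lt hrpos)
    have heq : x t ^ (1 + ε) / Real.sqrt 2 * x t ^ (-ε - 1) = 1 / Real.sqrt 2 := by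
      field_simp
      linarith [hr]
    rw [heq] at this
    have : ε * (1 / Real.sqrt 2) ≤ ε * (x' t * x t ^ (-ε - 1)) :=
      mul_le_mul_of_nonneg_left this (le_of_lt hε)
    have hceq : c = ε * (1 / Real.sqrt 2) := by rw [hc]; ring
    nlinarith
  have hanti := BU.antiIci hgd hgd0
  set T : ℝ := 2 + 2 / c with hT
  have hT2 : (2:ℝ) ≤ T := by
    have : 0 < 2 / c := by positivity
    rw [hT]
    linarith
  have hTmem : T ∈ Ici (2:ℝ) := mem_Ici.mpr hT2
  have hle := hanti (self_mem_Ici) hTmem hT2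
  have hg2 : x 2 ^ (-ε:ℝ) ≤ 1 :=
    Real.rpow_le_one_of_one_le_of_nonpos (hx1 2 (by norm_num)) (by linarith)
  have hgTpos : 0 < x T ^ (-ε:ℝ) :=
    Real.rpow_pos_of_pos (by linarith [hx1 T (by linarith : (0:ℝ) ≤ T)]) _
  have hcT : c * T = 2 * c + 2 := by
    rw [hT]
    field_simp
  simp only at hle
  rw [hcT] at hle
  linarith

lemma BU.integrable (ε : ℝ) (hε : 0 < ε) :
    IntegrableOn (fun σ : ℝ => 1 / Real.sqrt (σ ^ (2 * (1 + ε)) - 1))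
      (Set.Ioi 1) := by
  have hp2 : (2:ℝ) ≤ 2 * (1 + ε) := by nlinarith
  have hp0 : (0:ℝ) < 2 * (1 + ε) := by nlinarith
  set f : ℝ → ℝ := fun σ => 1 / Real.sqrt (σ ^ (2 * (1 + ε)) - 1) with hf
  -- measurability
  have hmeas : Measurable f := by
    apply Measurable.div measurable_const
    exact (((Real.continuous_rpow_const (le_of_lt hp0)).measurable).sub
      measurable_const).sqrt
  -- part on (1, 2]
  have hpart1 : IntegrableOn f (Ioc 1 2) := by
    have hw : IntegrableOn (fun σ : ℝ => 1 / Real.sqrt (σ - 1)) (Ioc 1 2) := by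
      apply intervalIntegral.integrableOn_deriv_of_nonneg
        (g := fun σ => 2 * Real.sqrt (σ - 1))
      · exact (continuous_const.mul (Real.continuous_sqrt.comp
          (continuous_id.sub continuous_const))).continuousOn
      · intro σ hσ
        have h1 : σ - 1 ≠ 0 := sub_ne_zero.mpr (ne_of_gt hσ.1)
        have hs : 0 < Real.sqrt (σ - 1) := Real.sqrt_pos.mpr (by linarith [hσ.1])
        have := ((Real.hasDerivAt_sqrt h1).comp σ ((hasDerivAt_id σ).sub_const 1)).const_mul 2
        refine this.congr_deriv ?_
        field_simp
      · intro σ hσ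
        positivity
    apply hw.mono' (hmeas.aestronglyMeasurable.restrict)
    rw [ae_restrict_iff' measurableSet_Ioc]
    filter_upwards with σ hσ
    obtain ⟨hσ1, hσ2⟩ := hσ
    have hσ0 : (0:ℝ) ≤ σ := by linarith
    have h1 : σ - 1 ≤ σ ^ (2 * (1 + ε)) - 1 := by
      have e1 : σ ^ (2:ℝ) ≤ σ ^ (2 * (1 + ε)) :=
        Real.rpow_le_rpow_of_exponent_le (le_of_lt hσ1) hp2
      have e2 : σ ^ (2:ℝ) = σ * σ := by
        rw [show (2:ℝ) = ((2:ℕ):ℝ) by norm_num, Real.rpow_natCast]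
        ring
      rw [e2] at e1
      nlinarith [e1]
    have hpos : 0 < Real.sqrt (σ - 1) := Real.sqrt_pos.mpr (by linarith)
    have hle : Real.sqrt (σ - 1) ≤ Real.sqrt (σ ^ (2 * (1 + ε)) - 1) := Real.sqrt_le_sqrt h1
    rw [Real.norm_of_nonneg (by positivity)]
    exact one_div_le_one_div_of_le hpos hle
  -- part on (2, ∞)
  have hpart2 : IntegrableOn f (Ioi 2) := by
    have hg : IntegrableOn (fun σ : ℝ => Real.sqrt 2 * σ ^ (-(1 + ε))) (Ioi 2) :=
      (integrableOn_Ioi_rpow_of_lt (by linarith) (by norm_num)).const_mul _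
    apply hg.mono' (hmeas.aestronglyMeasurable.restrict)
    rw [ae_restrict_iff' measurableSet_Ioi]
    filter_upwards with σ hσ
    have hσ2 : (2:ℝ) < σ := hσ
    have hσ0 : (0:ℝ) < σ := by linarith
    have hxp2 : (2:ℝ) ≤ σ ^ (2 * (1 + ε)) := by
      calc (2:ℝ) = 2 ^ (1:ℝ) := (Real.rpow_one 2).symm
        _ ≤ 2 ^ (2 * (1 + ε)) := Real.rpow_le_rpow_of_exponent_le one_le_two (by nlinarith)
        _ ≤ σ ^ (2 * (1 + ε)) := Real.rpow_le_rpow (by norm_num) (le_of_lt hσ2) (le_of_lt hp0)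
    have h1 : σ ^ (2 * (1 + ε)) / 2 ≤ σ ^ (2 * (1 + ε)) - 1 := by linarith
    have hsq2 : σ ^ (2 * (1 + ε)) = (σ ^ (1 + ε)) ^ 2 := by
      rw [← Real.rpow_natCast (σ ^ (1 + ε)) 2, ← Real.rpow_mul (le_of_lt hσ0)]
      norm_num
      ring_nf
    have hs2 : Real.sqrt (σ ^ (2 * (1 + ε)) / 2) = σ ^ (1 + ε) / Real.sqrt 2 := by
      rw [Real.sqrt_div (by positivity), hsq2, Real.sqrt_sq (by positivity)]
    have hle : σ ^ (1 + ε) / Real.sqrt 2 ≤ Real.sqrt (σ ^ (2 * (1 + ε)) - 1) := by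
      rw [← hs2]
      exact Real.sqrt_le_sqrt h1
    have hppos : (0:ℝ) < σ ^ (1 + ε) := Real.rpow_pos_of_pos hσ0 _
    have hsp : (0:ℝ) < Real.sqrt 2 := Real.sqrt_pos.mpr (by norm_num)
    have hdenpos : (0:ℝ) < σ ^ (1 + ε) / Real.sqrt 2 := by positivity
    have hfb : f σ ≤ Real.sqrt 2 / σ ^ (1 + ε) := by
      have := one_div_le_one_div_of_le hdenpos hle
      rwa [one_div_div] at this
    rw [Real.norm_of_nonneg (by positivity)]
    calc f σ ≤ Real.sqrt 2 / σ ^ (1 + ε) := hfb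
      _ = Real.sqrt 2 * σ ^ (-(1 + ε)) := by
          rw [Real.rpow_neg (le_of_lt hσ0), div_eq_mul_inv]
  have : Ioc (1:ℝ) 2 ∪ Ioi 2 = Ioi 1 := Set.Ioc_union_Ioi_eq_Ioi (by norm_num)
  rw [← this]
  exact hpart1.union hpart2


/-- Finite-time blow-up for `x'' = (1+ε) x^{1+2ε}`, `x(0) = 1`, `x'(0) = 0`:
any solution satisfies the energy identity `x'(t)² = x(t)^{2(1+ε)} - 1`, there is
no globally defined solution (so the maximal solution has `b < +∞`), and the
blow-up integral `∫₁^∞ dσ/√(σ^{2(1+ε)} - 1)` is finite. -/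
theorem blow_up_superlinear_force (ε : ℝ) (hε : 0 < ε) :
    (∀ (b : ℝ) (x x' : ℝ → ℝ),
      (∀ t ∈ Set.Ico (0:ℝ) b, HasDerivAt x (x' t) t) →
      (∀ t ∈ Set.Ico (0:ℝ) b, HasDerivAt x' ((1 + ε) * x t ^ (1 + 2 * ε)) t) →
      x 0 = 1 → x' 0 = 0 →
      ∀ t ∈ Set.Ico (0:ℝ) b, (x' t) ^ 2 = x t ^ (2 * (1 + ε)) - 1) ∧
    (¬ ∃ x x' : ℝ → ℝ,
      (∀ t : ℝ, 0 ≤ t → HasDerivAt x (x' t) t) ∧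
      (∀ t : ℝ, 0 ≤ t → HasDerivAt x' ((1 + ε) * x t ^ (1 + 2 * ε)) t) ∧
      x 0 = 1 ∧ x' 0 = 0) ∧
    IntegrableOn (fun σ : ℝ => 1 / Real.sqrt (σ ^ (2 * (1 + ε)) - 1))
      (Set.Ioi 1) := by
  exact ⟨fun b x x' hx hx' h0 h0' => BU.energy ε hε b x x' hx hx' h0 h0',
    BU.noglobal ε hε, BU.integrable ε hε⟩
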